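/- Let Q be a qualification domain with carrier D and let ℛ be a Q-valued similarity relation on S = Var ⊎ DC (i.e., a Q-valued proximity relation additionally satisfying transitivity: ℛ(x,z) ⊒ ℛ(x,y) ⊓ ℛ(y,z) for all x, y, z ∈ S) that is the identity on variables and satisfies ℛ(x,y) ≠ ⊥ only if x = y or x, y are data constructors of the same arity. Then the extension of ℛ to terms is also transitive: ℛ(t,r) ⊒ ℛ(t,s) ⊓ ℛ(s,r) for all terms t, s, r. -/

import Mathlib

/-- A qualification domain: a bounded lattice equipped with an attenuation operation. -/
structure QualificationDomain (D : Type*) [Lattice D] [BoundedOrder D] where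
  att : D → D → D
  att_assoc : ∀ d e f : D, att (att d e) f = att d (att e f)
  att_comm : ∀ d e : D, att d e = att e d
  att_mono : ∀ d d' e e' : D, d ≤ d' → e ≤ e' → att d e ≤ att d' e'
  att_top : ∀ d : D, att d ⊤ = d
  att_bot : ∀ d : D, att d ⊥ = ⊥
  att_le : ∀ d e : D, att d e ≤ e
  att_ne_bot : ∀ d e : D, d ≠ ⊥ → e ≠ ⊥ → att d e ≠ ⊥
  att_inf : ∀ d e₁ e₂ : D, att d (e₁ ⊓ e₂) = att d e₁ ⊓ att d e₂

/-- First-order terms over variables `V` and data constructors `CS`. -/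
inductive Trm (V : Type*) (CS : Type*) : Type _
  | var : V → Trm V CS
  | app : CS → List (Trm V CS) → Trm V CS

variable {V CS : Type*} {D : Type*} [Lattice D] [BoundedOrder D]

/-- The extension of a proximity relation on symbols to a proximity relation on terms:
`ext R (var X) (var X) = ⊤`, `ext R t s = ⊥` if exactly one of `t`, `s` is a variable or
they are applications of different arities, and
`ext R (c(t₁,…,tₙ)) (c'(s₁,…,sₙ)) = R c c' ⊓ ext R t₁ s₁ ⊓ ⋯ ⊓ ext R tₙ sₙ`. -/
def Trm.ext [DecidableEq V] (R : CS → CS → D) : Trm V CS → Trm V CS → D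
  | .var X, .var Y => if X = Y then (⊤ : D) else ⊥
  | .var _, .app _ _ => ⊥
  | .app _ _, .var _ => ⊥
  | .app c ts, .app c' ss =>
      if ts.length = ss.length then
        R c c' ⊓ ((ts.zip ss).attach.map (fun p => Trm.ext R p.1.1 p.1.2)).foldr (· ⊓ ·) ⊤
      else ⊥
termination_by t _ => sizeOf t
decreasing_by
  have h1 : p.1.1 ∈ ts := (List.of_mem_zip p.2).1
  have := List.sizeOf_lt_of_mem h1
  simp only [Trm.app.sizeOf_spec]
  omega



def extFold [DecidableEq V] (R : CS → CS → D) (ts ss : List (Trm V CS)) : D :=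
  ((ts.zip ss).map (fun p => Trm.ext R p.1 p.2)).foldr (· ⊓ ·) ⊤

lemma ext_app [DecidableEq V] (R : CS → CS → D) (c c' : CS) (ts ss : List (Trm V CS)) :
    Trm.ext R (.app c ts) (.app c' ss) =
      if ts.length = ss.length then R c c' ⊓ extFold R ts ss else ⊥ := by
  rw [Trm.ext, extFold]
  rw [List.attach_map_val (l := ts.zip ss) (f := fun p => Trm.ext R p.1 p.2)]

lemma extFold_trans [DecidableEq V] (R : CS → CS → D) :
    ∀ (ts ss rs : List (Trm V CS)), ts.length = ss.length → ss.length = rs.length →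
    (∀ a ∈ ts, ∀ s r, Trm.ext R a s ⊓ Trm.ext R s r ≤ Trm.ext R a r) →
    extFold R ts ss ⊓ extFold R ss rs ≤ extFold R ts rs := by
  intro ts
  induction ts with
  | nil =>
    intro ss rs h1 h2 _
    cases ss <;> cases rs <;> simp_all [extFold]
  | cons a ts ih =>
    intro ss rs h1 h2 hpt
    cases ss with
    | nil => simp at h1
    | cons b ss =>
      cases rs with
      | nil => simp at h2
      | cons c rs =>
        simp only [extFold, List.zip_cons_cons, List.map_cons, List.foldr_cons] at *
        have h3 := hpt a (List.mem_cons_self (a := a) (l := ts)) b c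
        have h4 : extFold R ts ss ⊓ extFold R ss rs ≤ extFold R ts rs := by
          apply ih ss rs (by simpa using h1) (by simpa using h2)
          intro x hx; exact hpt x (List.mem_cons_of_mem a hx)
        calc (Trm.ext R a b ⊓ extFold R ts ss) ⊓ (Trm.ext R b c ⊓ extFold R ss rs)
            = (Trm.ext R a b ⊓ Trm.ext R b c) ⊓ (extFold R ts ss ⊓ extFold R ss rs) := by
              rw [inf_assoc, inf_assoc]; congr 1
              rw [← inf_assoc, ← inf_assoc, inf_comm (extFold R ts ss)]
          _ ≤ Trm.ext R a c ⊓ extFold R ts rs := inf_le_inf h3 h4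

/-- Let `Q` be a qualification domain with carrier `D` and `ℛ` a `Q`-valued
similarity relation (a proximity relation that is moreover transitive) on `Var ⊎ DC` that is
the identity on variables and nonbottom between distinct symbols only for data constructors
of the same arity.  Then its extension to terms is also transitive:
`ℛ(t,r) ⊒ ℛ(t,s) ⊓ ℛ(s,r)` for all terms `t`, `s`, `r`. -/
theorem extension_to_terms_of_similarity_is_transitive [DecidableEq V]
    (Q : QualificationDomain D) (arC : CS → ℕ) (R : CS → CS → D)
    (h_refl : ∀ c, R c c = ⊤)
    (h_symm : ∀ c c', R c c' = R c' c)
    (h_arity : ∀ c c', R c c' ≠ ⊥ → arC c = arC c')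
    (h_trans : ∀ c c' c'', R c c' ⊓ R c' c'' ≤ R c c'') :
    ∀ t s r : Trm V CS, Trm.ext R t s ⊓ Trm.ext R s r ≤ Trm.ext R t r := by
  suffices h : ∀ n (t s r : Trm V CS), sizeOf t < n →
      Trm.ext R t s ⊓ Trm.ext R s r ≤ Trm.ext R t r by
    intro t s r; exact h (sizeOf t + 1) t s r (Nat.lt_succ_self _)
  intro n
  induction n with
  | zero => intro t s r ht; omega
  | succ n ih =>
    intro t s r ht
    match t, s, r with
    | .var X, .var Y, .var Z =>
      simp only [Trm.ext]
      split_ifs <;> simp_all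
    | .var X, .var Y, .app c rs => simp [Trm.ext]
    | .var X, .app c ss, r => simp [Trm.ext]
    | .app c ts, .var Y, r => simp [Trm.ext]
    | .app c ts, .app c' ss, .var Z => simp [Trm.ext]
    | .app c ts, .app c' ss, .app c'' rs =>
      rw [ext_app, ext_app, ext_app]
      split_ifs with h1 h2 h3
      case _ =>
        have hpt : ∀ a ∈ ts, ∀ s r, Trm.ext R a s ⊓ Trm.ext R s r ≤ Trm.ext R a r := by
          intro a ha s' r'
          apply ih
          have h5 := List.sizeOf_lt_of_mem ha
          have h6 : sizeOf (Trm.app c ts) = 1 + sizeOf c + sizeOf ts := by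
            simp [Trm.app.sizeOf_spec]
          omega
        calc (R c c' ⊓ extFold R ts ss) ⊓ (R c' c'' ⊓ extFold R ss rs)
            = (R c c' ⊓ R c' c'') ⊓ (extFold R ts ss ⊓ extFold R ss rs) := by
              rw [inf_assoc, inf_assoc]; congr 1
              rw [← inf_assoc, ← inf_assoc, inf_comm (extFold R ts ss)]
          _ ≤ R c c'' ⊓ extFold R ts rs :=
              inf_le_inf (h_trans c c' c'') (extFold_trans R ts ss rs h1 h2 hpt)
      case _ => exact absurd (h1.trans h2) h3
      all_goals simp
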